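/- arXiv:2603.19221 — 2 statements merged into one kernel-verified Lean document; each statement's English description precedes it below -/
import Mathlib

section
/- Let σ be the logistic function and σ^{-1} its inverse. If x̃, x* ∈ [-1,1], τ > 0, and |σ(x̃/τ) − σ(x*/τ)| ≤ ε, then |x̃ − x*| ≤ τ(e^{1/τ}+1)^2 · ε. -/
noncomputable def logistic (x : ℝ) : ℝ := Real.exp x / (1 + Real.exp x)

lemma logistic_hasDerivAt (x : ℝ) :
    HasDerivAt logistic (Real.exp x / (1 + Real.exp x) ^ 2) x := by
  have h1 : (1 : ℝ) + Real.exp x ≠ 0 := by positivity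
  have h : HasDerivAt logistic _ x := (Real.hasDerivAt_exp x).div
    ((hasDerivAt_const x (1 : ℝ)).add (Real.hasDerivAt_exp x)) h1
  convert h using 1
  ring

lemma key_ineq (τ : ℝ) (hτ : 0 < τ) (a b : ℝ) (ha : a ∈ Set.Icc (-1 : ℝ) 1)
    (hb : b ∈ Set.Icc (-1 : ℝ) 1) (hab : a < b) :
    b - a ≤ τ * (Real.exp (1 / τ) + 1) ^ 2 * (logistic (b / τ) - logistic (a / τ)) := by
  set f : ℝ → ℝ := fun u => logistic (u / τ) with hf_def
  have hf : ∀ u : ℝ, HasDerivAt f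
      (Real.exp (u / τ) / (1 + Real.exp (u / τ)) ^ 2 * (1 / τ)) u := by
    intro u
    exact (logistic_hasDerivAt (u / τ)).comp u ((hasDerivAt_id u).div_const τ)
  obtain ⟨c, hc, hceq⟩ := exists_hasDerivAt_eq_slope f
    (fun u => Real.exp (u / τ) / (1 + Real.exp (u / τ)) ^ 2 * (1 / τ)) hab
    (fun u _ => (hf u).continuousAt.continuousWithinAt)
    (fun u _ => hf u)
  rw [eq_div_iff (sub_ne_zero.2 hab.ne')] at hceq
  have hc1 : -1 ≤ c := le_of_lt (lt_of_le_of_lt ha.1 hc.1)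
  have hc2 : c ≤ 1 := le_of_lt (lt_of_lt_of_le hc.2 hb.2)
  set A := Real.exp (c / τ) with hA_def
  set B := Real.exp (1 / τ) with hB_def
  have hA0 : 0 < A := Real.exp_pos _
  have hB1 : (1 : ℝ) ≤ B := Real.one_le_exp (by positivity)
  have hAB : A ≤ B := Real.exp_le_exp.2 (by gcongr)
  have h1AB : (1 : ℝ) ≤ A * B := by
    rw [hA_def, hB_def, ← Real.exp_add]
    exact Real.one_le_exp (by rw [← add_div]; exact div_nonneg (by linarith) hτ.le)
  have hkey : (1 + A) ^ 2 ≤ A * (B + 1) ^ 2 := by nlinarith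
  have hba : 0 < b - a := sub_pos.2 hab
  have h1A : (0 : ℝ) < (1 + A) ^ 2 := by positivity
  have hgoal : b - a ≤ τ * (B + 1) ^ 2 * (A / (1 + A) ^ 2 * (1 / τ) * (b - a)) := by
    have heq : τ * (B + 1) ^ 2 * (A / (1 + A) ^ 2 * (1 / τ) * (b - a))
        = (b - a) * (A * (B + 1) ^ 2) / (1 + A) ^ 2 := by
      field_simp
    rw [heq, le_div_iff₀ h1A]
    nlinarith [mul_le_mul_of_nonneg_left hkey hba.le]
  calc b - a ≤ τ * (B + 1) ^ 2 * (A / (1 + A) ^ 2 * (1 / τ) * (b - a)) := hgoal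
    _ = τ * (B + 1) ^ 2 * (f b - f a) := by rw [hceq]
    _ = τ * (Real.exp (1 / τ) + 1) ^ 2 * (logistic (b / τ) - logistic (a / τ)) := rfl

theorem stmt_2 (τ : ℝ) (hτ : 0 < τ) (xt xs ε : ℝ)
    (hxt : xt ∈ Set.Icc (-1 : ℝ) 1) (hxs : xs ∈ Set.Icc (-1 : ℝ) 1)
    (hε : |logistic (xt / τ) - logistic (xs / τ)| ≤ ε) :
    |xt - xs| ≤ τ * (Real.exp (1 / τ) + 1) ^ 2 * ε := by
  have hε0 : 0 ≤ ε := le_trans (abs_nonneg _) hε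
  have hC : 0 ≤ τ * (Real.exp (1 / τ) + 1) ^ 2 := by positivity
  rcases lt_trichotomy xt xs with h | h | h
  · have hkey := key_ineq τ hτ xt xs hxt hxs h
    have h1 : logistic (xs / τ) - logistic (xt / τ) ≤ ε := by
      calc logistic (xs / τ) - logistic (xt / τ) ≤ |logistic (xs / τ) - logistic (xt / τ)| :=
            le_abs_self _
        _ = |logistic (xt / τ) - logistic (xs / τ)| := abs_sub_comm _ _
        _ ≤ ε := hε
    rw [abs_sub_comm, abs_of_pos (sub_pos.2 h)]
    calc xs - xt ≤ τ * (Real.exp (1 / τ) + 1) ^ 2 * (logistic (xs / τ) - logistic (xt / τ)) :=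
          hkey
      _ ≤ τ * (Real.exp (1 / τ) + 1) ^ 2 * ε := mul_le_mul_of_nonneg_left h1 hC
  · rw [h, sub_self, abs_zero]
    positivity
  · have hkey := key_ineq τ hτ xs xt hxs hxt h
    have h1 : logistic (xt / τ) - logistic (xs / τ) ≤ ε := le_trans (le_abs_self _) hε
    rw [abs_of_pos (sub_pos.2 h)]
    calc xt - xs ≤ τ * (Real.exp (1 / τ) + 1) ^ 2 * (logistic (xt / τ) - logistic (xs / τ)) :=
          hkey
      _ ≤ τ * (Real.exp (1 / τ) + 1) ^ 2 * ε := mul_le_mul_of_nonneg_left h1 hC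
end

section
/- Under the Plackett–Luce model with temperature τ > 0 over a multiset S with |S| = K, for any distinct actions a ≠ b occurring in S, the expected number of ordered pairs of positions (k₁ < k₂) with σ(k₁) = a and σ(k₂) = b equals #_S(a)·#_S(b)·σ((u(a)−u(b))/τ), where σ is the logistic function. -/
/-- Plackett–Luce probability of a ranking (list) `l` of the proposed actions. -/
noncomputable def PLprob {A : Type*} (u : A → ℝ) (τ : ℝ) : List A → ℝ
  | [] => 1
  | a :: rest =>
      Real.exp (u a / τ) / (((a :: rest).map fun b => Real.exp (u b / τ)).sum) *
        PLprob u τ rest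

/-- Number of pairs of positions `k₁ < k₂` in the list with `l_{k₁} = a` and `l_{k₂} = b`. -/
def pairCount {A : Type*} [DecidableEq A] (a b : A) : List A → ℕ
  | [] => 0
  | x :: rest => (if x = a then rest.count b else 0) + pairCount a b rest

namespace PLX

set_option linter.unusedSectionVars false

variable {A : Type*} [DecidableEq A]

noncomputable def psum (L : List A) (f : List A → ℝ) : ℝ := (L.permutations'.map f).sum

noncomputable def paSum (x : A) (f : List A → ℝ) (l : List A) : ℝ :=
  ((List.permutations'Aux x l).map f).sum

noncomputable def selSum (f : List A → ℝ) : List A → List A → ℝ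
  | _, [] => 0
  | pre, y :: post => psum (pre ++ post) (fun l => f (y :: l)) + selSum f (pre ++ [y]) post

lemma psum_nil (f : List A → ℝ) : psum [] f = f [] := by
  simp [psum, List.permutations']

lemma sum_map_flatMap {B C : Type*} (l : List B) (g : B → List C) (f : C → ℝ) :
    ((l.flatMap g).map f).sum = (l.map fun b => ((g b).map f).sum).sum := by
  induction l with
  | nil => simp
  | cons x l ih => simp [List.flatMap_cons, ih]

lemma psum_cons (x : A) (L : List A) (f : List A → ℝ) :
    psum (x :: L) f = psum L (paSum x f) := by
  show ((L.permutations'.flatMap (List.permutations'Aux x)).map f).sum = _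
  rw [sum_map_flatMap]; rfl

lemma paSum_cons (x h : A) (t : List A) (f : List A → ℝ) :
    paSum x f (h :: t) = f (x :: h :: t) + paSum x (fun l => f (h :: l)) t := by
  simp [paSum, List.permutations'Aux, List.map_map, Function.comp_def]

lemma psum_congr {L : List A} {f g : List A → ℝ} (h : ∀ l, l.Perm L → f l = g l) :
    psum L f = psum L g := by
  unfold psum
  rw [List.map_congr_left fun l hl => h l (List.mem_permutations'.1 hl)]

lemma sum_map_add {B : Type*} (l : List B) (f g : B → ℝ) :
    (l.map fun x => f x + g x).sum = (l.map f).sum + (l.map g).sum := by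
  induction l with
  | nil => simp
  | cons x l ih => simp [ih]; ring

lemma psum_add (L : List A) (f g : List A → ℝ) :
    psum L (fun l => f l + g l) = psum L f + psum L g := sum_map_add _ _ _

lemma psum_mul_left (L : List A) (c : ℝ) (f : List A → ℝ) :
    psum L (fun l => c * f l) = c * psum L f := by
  unfold psum
  induction L.permutations' with
  | nil => simp
  | cons x l ih => simp [ih]; ring

lemma selSum_paSum (x : A) (f : List A → ℝ) :
    ∀ (L pre : List A), selSum (paSum x f) pre L
      = selSum (fun l => f (x :: l)) pre L + selSum f (x :: pre) L := by
  intro L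
  induction L with
  | nil => intro pre; simp [selSum]
  | cons y post ih =>
    intro pre
    show psum (pre ++ post) (fun l => paSum x f (y :: l)) + selSum (paSum x f) (pre ++ [y]) post
      = (psum (pre ++ post) (fun l => f (x :: y :: l))
          + selSum (fun l => f (x :: l)) (pre ++ [y]) post)
        + (psum (x :: (pre ++ post)) (fun l => f (y :: l))
          + selSum f (x :: (pre ++ [y])) post)
    have h1 : psum (pre ++ post) (fun l => paSum x f (y :: l))
        = psum (pre ++ post)
            (fun l => f (x :: y :: l) + paSum x (fun l' => f (y :: l')) l) :=
      psum_congr fun l _ => paSum_cons x y l f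
    rw [h1, psum_add, ih (pre ++ [y]), ← psum_cons]
    ring

theorem psum_eq_selSum : ∀ (L : List A), L ≠ [] → ∀ f : List A → ℝ, psum L f = selSum f [] L := by
  intro L
  induction L with
  | nil => intro h; exact absurd rfl h
  | cons x L ih =>
    intro _ f
    by_cases hL : L = []
    · subst hL
      simp [psum, selSum, paSum, List.permutations', List.permutations'Aux]
    · rw [psum_cons, ih hL, selSum_paSum, ← ih hL]
      show psum L (fun l => f (x :: l)) + selSum f [x] L
        = psum ([] ++ L) (fun l => f (x :: l)) + selSum f ([] ++ [x]) L
      rfl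

end PLX

namespace PLX

set_option linter.unusedSectionVars false

variable {A : Type*} [DecidableEq A] (u : A → ℝ) (τ : ℝ)

local notation "w" => fun y => Real.exp (u y / τ)

lemma PL_cons (y : A) (l : List A) :
    PLprob u τ (y :: l) = w y / (w y + (l.map w).sum) * PLprob u τ l := by
  simp [PLprob]

lemma wsum_pos {l : List A} (h : l ≠ []) : 0 < (l.map w).sum := by
  cases l with
  | nil => exact absurd rfl h
  | cons x t =>
    simp only [List.map_cons, List.sum_cons]
    have h1 : (0:ℝ) < Real.exp (u x / τ) := Real.exp_pos _
    have h2 : (0:ℝ) ≤ (t.map w).sum :=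
      List.sum_nonneg (by
        intro r hr
        obtain ⟨y, _, rfl⟩ := List.mem_map.1 hr
        exact (Real.exp_pos _).le)
    linarith

lemma wsum_perm {l M : List A} (h : l.Perm M) : (l.map w).sum = (M.map w).sum :=
  (h.map w).sum_eq

lemma selNorm : ∀ (post pre : List A),
    (∀ M : List A, M.length + 1 = pre.length + post.length → psum M (PLprob u τ) = 1) →
    selSum (PLprob u τ) pre post = ((post.map w).sum) / (((pre ++ post).map w).sum) := by
  intro post
  induction post with
  | nil => intro pre _; simp [selSum]
  | cons y post ih =>
    intro pre H
    show psum (pre ++ post) (fun l => PLprob u τ (y :: l))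
        + selSum (PLprob u τ) (pre ++ [y]) post = _
    have hWfull : ∀ l : List A, l.Perm (pre ++ post) →
        w y + (l.map w).sum = ((pre ++ y :: post).map w).sum := by
      intro l hl
      rw [wsum_perm u τ hl]
      simp [List.map_append, List.sum_append]
      ring
    have h1 : psum (pre ++ post) (fun l => PLprob u τ (y :: l))
        = psum (pre ++ post)
            (fun l => (w y / ((pre ++ y :: post).map w).sum) * PLprob u τ l) := by
      refine psum_congr fun l hl => ?_
      rw [PL_cons, hWfull l hl]
    have hlen : (pre ++ post).length + 1 = pre.length + (y :: post).length := by
      simp; omega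
    rw [h1, psum_mul_left, H (pre ++ post) hlen, mul_one,
      ih (pre ++ [y]) (fun M hM => H M (by
        simp only [List.length_append, List.length_cons, List.length_nil] at hM ⊢
        omega))]
    have hrw : (((pre ++ [y]) ++ post).map w).sum = ((pre ++ y :: post).map w).sum := by
      simp [List.map_append, List.sum_append]
      try ring
    rw [hrw, ← add_div]
    simp

lemma psum_PL_one : ∀ (L : List A), psum L (PLprob u τ) = 1 := by
  suffices h : ∀ (n : ℕ) (L : List A), L.length ≤ n → psum L (PLprob u τ) = 1 by
    intro L; exact h L.length L le_rfl
  intro n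
  induction n with
  | zero =>
    intro L hL
    rw [List.length_eq_zero_iff.1 (Nat.le_zero.1 hL), psum_nil]
    simp [PLprob]
  | succ n ih =>
    intro L hL
    cases L with
    | nil => rw [psum_nil]; simp [PLprob]
    | cons x t =>
      rw [psum_eq_selSum _ (by simp) _,
        selNorm u τ (x :: t) [] (fun M hM => ih M (by simp at hM hL ⊢; omega))]
      simp only [List.nil_append]
      exact div_self (ne_of_gt (wsum_pos u τ (by simp)))

end PLX

namespace PLX

set_option linter.unusedSectionVars false

variable {A : Type*} [DecidableEq A] (u : A → ℝ) (τ : ℝ)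

local notation "w" => fun y => Real.exp (u y / τ)

lemma selMain (a b : A) (hab : a ≠ b) (m n : ℕ) (p : ℝ) :
    ∀ (post pre : List A) (W : ℝ),
    (((pre ++ post).map w).sum = W) →
    ((pre ++ post).count a = m) →
    ((pre ++ post).count b = n) →
    (∀ M : List A, M.length + 1 = pre.length + post.length →
       psum M (fun l => PLprob u τ l * (pairCount a b l : ℝ))
         = (M.count a : ℝ) * (M.count b : ℝ) * p) →
    selSum (fun l => PLprob u τ l * (pairCount a b l : ℝ)) pre post
      = (post.map fun y => w y / W *
          ((if y = a then (n:ℝ) else 0)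
            + ((m:ℝ) - if y = a then 1 else 0) * ((n:ℝ) - if y = b then 1 else 0) * p)).sum := by
  intro post
  induction post with
  | nil => intro pre W _ _ _ _; simp [selSum]
  | cons y post ih =>
    intro pre W hW hm hn hF
    show psum (pre ++ post)
        (fun l => PLprob u τ (y :: l) * (pairCount a b (y :: l) : ℝ))
      + selSum (fun l => PLprob u τ l * (pairCount a b l : ℝ)) (pre ++ [y]) post = _
    have hma : ((pre ++ post).count a : ℝ) = (m:ℝ) - (if y = a then 1 else 0) := by
      have h1 : (pre ++ post).count a + (if y = a then 1 else 0) = m := by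
        rw [← hm]; simp [List.count_append, List.count_cons]; omega
      have h2 : ((pre ++ post).count a : ℝ) + (if y = a then (1:ℝ) else 0) = (m:ℝ) := by
        rw [← h1]; push_cast [apply_ite (Nat.cast : ℕ → ℝ)]; ring
      linarith [h2]
    have hnb : ((pre ++ post).count b : ℝ) = (n:ℝ) - (if y = b then 1 else 0) := by
      have h1 : (pre ++ post).count b + (if y = b then 1 else 0) = n := by
        rw [← hn]; simp [List.count_append, List.count_cons]; omega
      have h2 : ((pre ++ post).count b : ℝ) + (if y = b then (1:ℝ) else 0) = (n:ℝ) := by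
        rw [← h1]; push_cast [apply_ite (Nat.cast : ℕ → ℝ)]; ring
      linarith [h2]
    have key : ∀ l : List A, l.Perm (pre ++ post) →
        PLprob u τ (y :: l) * (pairCount a b (y :: l) : ℝ)
          = (w y / W) *
            ((if y = a then ((n:ℝ) - if y = b then 1 else 0) else 0) * PLprob u τ l
              + PLprob u τ l * (pairCount a b l : ℝ)) := by
      intro l hl
      have hWl : w y + (l.map w).sum = W := by
        rw [wsum_perm u τ hl, ← hW]
        simp [List.map_append, List.sum_append]
        try ring
      have hcl : (l.count b : ℝ) = (n:ℝ) - (if y = b then 1 else 0) := by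
        rw [hl.count_eq b]; exact hnb
      rw [PL_cons, hWl]
      show _ = _
      have hpc : (pairCount a b (y :: l) : ℝ)
          = (if y = a then (l.count b : ℝ) else 0) + (pairCount a b l : ℝ) := by
        show ((((if y = a then l.count b else 0) + pairCount a b l : ℕ)) : ℝ) = _
        push_cast [apply_ite (Nat.cast : ℕ → ℝ)]
        ring
      rw [hpc, hcl]
      ring
    have h1 : psum (pre ++ post)
        (fun l => PLprob u τ (y :: l) * (pairCount a b (y :: l) : ℝ))
      = psum (pre ++ post)
          (fun l => (w y / W) *
            ((if y = a then ((n:ℝ) - if y = b then 1 else 0) else 0) * PLprob u τ l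
              + PLprob u τ l * (pairCount a b l : ℝ))) := psum_congr key
    rw [h1, psum_mul_left, psum_add, psum_mul_left, psum_PL_one, mul_one,
      hF (pre ++ post) (by simp only [List.length_append, List.length_cons]; omega),
      ih (pre ++ [y]) W
        (by rw [← hW]; simp [List.map_append, List.sum_append]; try ring)
        (by rw [← hm]; simp [List.count_append, List.count_cons]; try omega)
        (by rw [← hn]; simp [List.count_append, List.count_cons]; try omega)
        (fun M hM => hF M (by
          simp only [List.length_append, List.length_cons, List.length_nil] at hM ⊢
          omega))]
    rw [hma, hnb]
    simp only [List.map_cons, List.sum_cons]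
    have hC : (if y = a then ((n:ℝ) - if y = b then 1 else 0) else 0)
        = (if y = a then (n:ℝ) else 0) := by
      by_cases hya : y = a
      · subst hya
        have : ¬ (y = b) := fun h => hab (by rw [← h])
        simp [this]
      · simp [hya]
    rw [hC]
    try ring

lemma sum_e (a b : A) (hab : a ≠ b) (m n : ℕ) (p W : ℝ) : ∀ L : List A,
    (L.map fun y => w y / W *
        ((if y = a then (n:ℝ) else 0)
          + ((m:ℝ) - if y = a then 1 else 0) * ((n:ℝ) - if y = b then 1 else 0) * p)).sum
    = ((L.count a : ℝ) * (w a * ((n:ℝ) + ((m:ℝ)-1)*(n:ℝ)*p - (m:ℝ)*(n:ℝ)*p))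
      + (L.count b : ℝ) * (w b * ((m:ℝ)*((n:ℝ)-1)*p - (m:ℝ)*(n:ℝ)*p))
      + (L.map w).sum * ((m:ℝ)*(n:ℝ)*p)) / W := by
  intro L
  induction L with
  | nil => simp
  | cons y L ih =>
    rw [List.map_cons, List.sum_cons, ih, div_mul_eq_mul_div, ← add_div,
      List.map_cons, List.sum_cons]
    congr 1
    by_cases hya : y = a
    · subst hya
      have hyb : ¬ (y = b) := fun h => hab (by rw [← h])
      rw [List.count_cons_self, List.count_cons_of_ne (fun h => hyb (by rw [h]))]
      push_cast
      simp [hyb]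
      try ring
    · by_cases hyb : y = b
      · subst hyb
        rw [List.count_cons_self, List.count_cons_of_ne (fun h => hya (by rw [h]))]
        push_cast
        simp [hya]
        try ring
      · rw [List.count_cons_of_ne (fun h => hya (by rw [h])),
          List.count_cons_of_ne (fun h => hyb (by rw [h]))]
        simp [hya, hyb]
        try ring

lemma mainAux (a b : A) (hab : a ≠ b) (p : ℝ)
    (hp : p * (Real.exp (u a / τ) + Real.exp (u b / τ)) = Real.exp (u a / τ)) :
    ∀ (nn : ℕ) (L : List A), L.length ≤ nn →
      psum L (fun l => PLprob u τ l * (pairCount a b l : ℝ))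
        = (L.count a : ℝ) * (L.count b : ℝ) * p := by
  intro nn
  induction nn with
  | zero =>
    intro L hL
    rw [List.length_eq_zero_iff.1 (Nat.le_zero.1 hL), psum_nil]
    simp [pairCount]
  | succ nn ih =>
    intro L hL
    cases L with
    | nil => rw [psum_nil]; simp [pairCount]
    | cons x t =>
      have hne : (x :: t) ≠ [] := by simp
      rw [psum_eq_selSum _ hne,
        selMain u τ a b hab ((x :: t).count a) ((x :: t).count b) p (x :: t) []
          (((x :: t).map w).sum) rfl rfl rfl
          (fun M hM => ih M (by
            simp only [List.length_nil, List.length_cons] at hM hL ⊢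
            omega)),
        sum_e u τ a b hab _ _ p _ (x :: t)]
      have hW0 : ((x :: t).map w).sum ≠ 0 := ne_of_gt (wsum_pos u τ hne)
      rw [div_eq_iff hW0]
      linear_combination (-(((x :: t).count a : ℝ) * ((x :: t).count b : ℝ))) * hp

end PLX

theorem stmt_4 {A : Type*} [DecidableEq A] (u : A → ℝ) (τ : ℝ) (hτ : 0 < τ)
    (L : List A) (a b : A) (hab : a ≠ b) (ha : a ∈ L) (hb : b ∈ L) :
    (L.permutations.map fun l => PLprob u τ l * (pairCount a b l : ℝ)).sum =
      (L.count a : ℝ) * (L.count b : ℝ) * logistic ((u a - u b) / τ) := by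
  have hperm := ((List.permutations_perm_permutations' L).map
    (fun l => PLprob u τ l * (pairCount a b l : ℝ))).sum_eq
  rw [hperm]
  show PLX.psum L _ = _
  have hp : logistic ((u a - u b) / τ) * (Real.exp (u a / τ) + Real.exp (u b / τ))
      = Real.exp (u a / τ) := by
    unfold logistic
    rw [sub_div, Real.exp_sub]
    have h1 : Real.exp (u b / τ) ≠ 0 := (Real.exp_pos _).ne'
    have h2 : (0:ℝ) < 1 + Real.exp (u a / τ) / Real.exp (u b / τ) := by positivity
    field_simp
    ring
  exact PLX.mainAux u τ a b hab _ hp L.length L le_rfl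
end
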